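/- If a nonzero vector d ∈ ℤ^n is fixed and r ∈ {0,1}^n has independent uniform {0,1} entries, then Pr[⟨d, r⟩ = 0] ≤ 1/2. -/

import Mathlib

/-- Row-level lemma for Freivalds' algorithm: if `d : Fin n → ℤ` is a nonzero
vector and `r ∈ {0,1}^n` has independent uniform bits, then
`Pr[⟨d, r⟩ = 0] ≤ 1/2`. -/
theorem freivalds_row (n : ℕ) (d : Fin n → ℤ) (hd : d ≠ 0) :
    (((Finset.univ : Finset (Fin n → Bool)).filter
        (fun ω => ∑ i, d i * (if ω i then (1 : ℤ) else 0) = 0)).card : ℚ) /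
      ((2 : ℚ) ^ n) ≤ 1 / 2 := by
  obtain ⟨i, hi⟩ : ∃ i, d i ≠ 0 := by
    by_contra h
    push_neg at h
    exact hd (funext h)
  set S := (Finset.univ : Finset (Fin n → Bool)).filter
      (fun ω => ∑ i, d i * (if ω i then (1 : ℤ) else 0) = 0) with hS
  set T := (Finset.univ : Finset (Fin n → Bool)).filter
      (fun ω => ∑ i, d i * (if ω i then (1 : ℤ) else 0) ≠ 0) with hT
  have key : ∀ ω : Fin n → Bool,
      ∑ j, d j * (if Function.update ω i (!ω i) j then (1 : ℤ) else 0)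
        = (∑ j, d j * (if ω j then (1 : ℤ) else 0))
          + d i * ((if !ω i then (1:ℤ) else 0) - (if ω i then (1:ℤ) else 0)) := by
    intro ω
    have hfun : (fun j => d j * (if Function.update ω i (!ω i) j then (1:ℤ) else 0))
        = Function.update (fun j => d j * (if ω j then (1:ℤ) else 0)) i
            (d i * (if !ω i then (1:ℤ) else 0)) := by
      funext j
      rcases eq_or_ne j i with rfl | hj
      · simp
      · simp [Function.update_of_ne hj]
    calc ∑ j, d j * (if Function.update ω i (!ω i) j then (1:ℤ) else 0)
        = ∑ j, Function.update (fun j => d j * (if ω j then (1:ℤ) else 0)) i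
            (d i * (if !ω i then (1:ℤ) else 0)) j := by rw [← hfun]
      _ = d i * (if !ω i then (1:ℤ) else 0)
            + ∑ j ∈ Finset.univ \ {i}, d j * (if ω j then (1:ℤ) else 0) :=
          Finset.sum_update_of_mem (Finset.mem_univ i) _ _
      _ = _ := by
          rw [Finset.sdiff_singleton_eq_erase,
            ← Finset.sum_erase_add Finset.univ _ (Finset.mem_univ i)]
          ring
  have hinj : ∀ ω ∈ S, Function.update ω i (!ω i) ∈ T := by
    intro ω hω
    simp only [hS, Finset.mem_filter, Finset.mem_univ, true_and] at hω
    simp only [hT, Finset.mem_filter, Finset.mem_univ, true_and]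
    rw [key, hω, zero_add]
    cases h : ω i <;> simp [h, hi]
  have hcard : S.card ≤ T.card := by
    apply Finset.card_le_card_of_injOn (fun ω => Function.update ω i (!ω i)) (by intro ω hω; exact hinj ω hω)
    intro a _ b _ hab
    have := congrArg (fun f => Function.update f i (!f i)) hab
    simpa [Function.update_idem, Function.update_self, Function.update_eq_self] using this
  have hsum : S.card + T.card = 2 ^ n := by
    rw [hS, hT, Finset.card_filter_add_card_filter_not, Finset.card_univ]
    simp [Fintype.card_fun]
  have h2 : 2 * S.card ≤ 2 ^ n := by omega
  rw [div_le_div_iff₀ (by positivity) (by norm_num)]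
  have : ((2 * S.card : ℕ) : ℚ) ≤ ((2 ^ n : ℕ) : ℚ) := by exact_mod_cast h2
  push_cast at this ⊢
  linarith
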